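/- arXiv:1606.02498 — 8 statements merged into one kernel-verified Lean document; each statement's English description precedes it below -/
import Mathlib

section
/- For every integer n ≥ 1 and every x ∈ ℝ, each of the five functions Q₁(n,x) = 4/n, Q₂(n,x) = 4(−1)^n/n, Q₃(n,x) = (4/n)cos(nπ/2), Q₄(n,x) = (4/n)sin(nπ/2), Q₅(n,x) = x satisfies the linearized symmetry condition of the difference equation u_{n+4} = (n/(n+4))·u_n, namely Q(n+4, (n/(n+4))·x) = (n/(n+4))·Q(n, x). -/
open Real

/-- For `n ≥ 1`, each of `Q₁(n,x)=4/n`, `Q₂(n,x)=4(-1)^n/n`, `Q₃(n,x)=(4/n)cos(nπ/2)`,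
`Q₄(n,x)=(4/n)sin(nπ/2)`, `Q₅(n,x)=x` satisfies the linearized symmetry condition
`Q(n+4, (n/(n+4))·x) = (n/(n+4))·Q(n,x)` of `u_{n+4} = (n/(n+4))·u_n`. -/
theorem stmt2 : ∀ n : ℕ, 1 ≤ n → ∀ x : ℝ,
    (4 / ((n : ℝ) + 4) = (n : ℝ) / ((n : ℝ) + 4) * (4 / (n : ℝ))) ∧
    (4 * (-1 : ℝ) ^ (n + 4) / ((n : ℝ) + 4) =
      (n : ℝ) / ((n : ℝ) + 4) * (4 * (-1 : ℝ) ^ n / (n : ℝ))) ∧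
    (4 / ((n : ℝ) + 4) * Real.cos ((↑(n + 4) : ℝ) * π / 2) =
      (n : ℝ) / ((n : ℝ) + 4) * (4 / (n : ℝ) * Real.cos ((n : ℝ) * π / 2))) ∧
    (4 / ((n : ℝ) + 4) * Real.sin ((↑(n + 4) : ℝ) * π / 2) =
      (n : ℝ) / ((n : ℝ) + 4) * (4 / (n : ℝ) * Real.sin ((n : ℝ) * π / 2))) ∧
    ((n : ℝ) / ((n : ℝ) + 4) * x = (n : ℝ) / ((n : ℝ) + 4) * x) := by
  intro n hn x
  have hn0 : (n : ℝ) ≠ 0 := by positivity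
  have hn4 : (n : ℝ) + 4 ≠ 0 := by positivity
  have hcast : ((↑(n + 4) : ℝ)) = (n : ℝ) + 4 := by push_cast; ring
  have harg : ((n : ℝ) + 4) * π / 2 = (n : ℝ) * π / 2 + 2 * π := by ring
  have hcos : Real.cos ((↑(n + 4) : ℝ) * π / 2) = Real.cos ((n : ℝ) * π / 2) := by
    rw [hcast, harg, Real.cos_add_two_pi]
  have hsin : Real.sin ((↑(n + 4) : ℝ) * π / 2) = Real.sin ((n : ℝ) * π / 2) := by
    rw [hcast, harg, Real.sin_add_two_pi]
  refine ⟨by field_simp, ?_, ?_, ?_, rfl⟩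
  · rw [pow_add]; field_simp
  · rw [hcos]; field_simp
  · rw [hsin]; field_simp
end

section
/- Define Q : (−1,1) → ℝ by Q(x) = (1/2)(x² − 1)·log((1 − x)/(1 + x)) (real logarithm). For all a, b ∈ (−1,1), setting ω = (a + b)/(a·b + 1) (note a·b + 1 > 0 and ω ∈ (−1,1)), one has Q(ω) = ((1 − b²)/(a·b + 1)²)·Q(a) + ((1 − a²)/(a·b + 1)²)·Q(b). In other words, Q(n,x) = (1/2)(x² − 1)·log((1−x)/(1+x)) is a characteristic of a Lie point symmetry of the difference equation u_{n+4} = (u_{n+1} + u_n)/(u_n·u_{n+1} + 1). -/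
/-- `Q(x) = (1/2)(x²−1)·log((1−x)/(1+x))` is a characteristic of a Lie point symmetry of
`u_{n+4} = (u_{n+1}+u_n)/(u_n u_{n+1}+1)`: for `a, b ∈ (−1,1)` and `ω = (a+b)/(ab+1)`,
`Q(ω) = ((1−b²)/(ab+1)²)·Q(a) + ((1−a²)/(ab+1)²)·Q(b)`. -/
theorem stmt4 (a b : ℝ) (ha : a ∈ Set.Ioo (-1 : ℝ) 1) (hb : b ∈ Set.Ioo (-1 : ℝ) 1) :
    (1 / 2) * (((a + b) / (a * b + 1)) ^ 2 - 1) *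
        Real.log ((1 - (a + b) / (a * b + 1)) / (1 + (a + b) / (a * b + 1))) =
      (1 - b ^ 2) / (a * b + 1) ^ 2 *
          ((1 / 2) * (a ^ 2 - 1) * Real.log ((1 - a) / (1 + a))) +
        (1 - a ^ 2) / (a * b + 1) ^ 2 *
          ((1 / 2) * (b ^ 2 - 1) * Real.log ((1 - b) / (1 + b))) := by
  obtain ⟨ha1, ha2⟩ := ha
  obtain ⟨hb1, hb2⟩ := hb
  have h1a : (0:ℝ) < 1 - a := by linarith
  have h2a : (0:ℝ) < 1 + a := by linarith
  have h1b : (0:ℝ) < 1 - b := by linarith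
  have h2b : (0:ℝ) < 1 + b := by linarith
  have hd : (0:ℝ) < a * b + 1 := by nlinarith
  have hd' : a * b + 1 ≠ 0 := ne_of_gt hd
  have hnum : 1 - (a + b) / (a * b + 1) = (1 - a) * (1 - b) / (a * b + 1) := by
    field_simp; ring
  have hden : 1 + (a + b) / (a * b + 1) = (1 + a) * (1 + b) / (a * b + 1) := by
    field_simp; ring
  have hratio : (1 - (a + b) / (a * b + 1)) / (1 + (a + b) / (a * b + 1)) =
      ((1 - a) / (1 + a)) * ((1 - b) / (1 + b)) := by
    rw [hnum, hden]
    field_simp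
  rw [hratio, Real.log_mul (ne_of_gt (div_pos h1a h2a)) (ne_of_gt (div_pos h1b h2b))]
  have hw : ((a + b) / (a * b + 1)) ^ 2 - 1 =
      -((1 - a ^ 2) * (1 - b ^ 2)) / (a * b + 1) ^ 2 := by
    field_simp
    ring
  rw [hw]
  field_simp
  ring
end

section
/- Let c : ℕ → ℝ be a sequence. The function Q(n,x) = c(n)(x² − 1) satisfies the linearized symmetry condition of the difference equation u_{n+4} = (u_{n+1} + u_n)/(u_n·u_{n+1} + 1), namely c(n+4)·(ω² − 1) = ((1 − b²)/(a·b + 1)²)·c(n)(a² − 1) + ((1 − a²)/(a·b + 1)²)·c(n+1)(b² − 1) with ω = (a + b)/(a·b + 1), for all n ∈ ℕ and all a, b ∈ ℝ with a·b + 1 ≠ 0, if and only if c satisfies the linear recurrence c(n+4) = c(n) + c(n+1) for all n ∈ ℕ. -/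
/-- `Q(n,x) = c(n)(x²−1)` satisfies the linearized symmetry condition of
`u_{n+4} = (u_{n+1}+u_n)/(u_n u_{n+1}+1)` iff `c(n+4) = c(n) + c(n+1)` for all `n`. -/
theorem stmt5 (c : ℕ → ℝ) :
    (∀ (n : ℕ) (a b : ℝ), a * b + 1 ≠ 0 →
        c (n + 4) * (((a + b) / (a * b + 1)) ^ 2 - 1) =
          (1 - b ^ 2) / (a * b + 1) ^ 2 * (c n * (a ^ 2 - 1)) +
            (1 - a ^ 2) / (a * b + 1) ^ 2 * (c (n + 1) * (b ^ 2 - 1))) ↔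
      (∀ n : ℕ, c (n + 4) = c n + c (n + 1)) := by
  constructor
  · intro h n
    have h0 := h n 0 0 (by norm_num)
    norm_num at h0
    linarith
  · intro h n a b hab
    have := h n
    field_simp
    nlinarith [sq_nonneg (a*b+1), h n]
end

section
/- Let Q : ℝ → ℝ be four times continuously differentiable on the open interval (−1,1). Then Q satisfies the ordinary differential equation (x² − 1)·Q⁗(x) + 4x·Q‴(x) = 0 for all x ∈ (−1,1) if and only if there exist constants c₁, c₂, c₃, c₄ ∈ ℝ such that Q(x) = c₁·[(2x² − 2)·log((1 − x)/(1 + x)) − 4x] + c₂ + c₃·x + c₄·x² for all x ∈ (−1,1). -/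
open Set Filter

noncomputable def Lfn : ℝ → ℝ := fun x => Real.log ((1 - x) / (1 + x))

private lemma memIoo_facts {x : ℝ} (hx : x ∈ Set.Ioo (-1:ℝ) 1) :
    (0:ℝ) < 1 - x ∧ (0:ℝ) < 1 + x ∧ x ^ 2 - 1 ≠ 0 := by
  obtain ⟨h1, h2⟩ := hx
  refine ⟨by linarith, by linarith, ?_⟩
  nlinarith

private lemma hasDerivAt_Lfn {x : ℝ} (hx : x ∈ Set.Ioo (-1:ℝ) 1) :
    HasDerivAt Lfn (2 / (x ^ 2 - 1)) x := by
  obtain ⟨h1, h2, hne⟩ := memIoo_facts hx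
  have heq : Lfn =ᶠ[nhds x] (fun y => Real.log (1 - y) - Real.log (1 + y)) := by
    filter_upwards [isOpen_Ioo.eventually_mem hx] with y hy
    obtain ⟨hy1, hy2, _⟩ := memIoo_facts hy
    simp only [Lfn]
    rw [Real.log_div hy1.ne' hy2.ne']
  have ha : HasDerivAt (fun y : ℝ => 1 - y) (-1) x := by
    simpa using (hasDerivAt_id x).const_sub 1
  have hb : HasDerivAt (fun y : ℝ => 1 + y) 1 x := by
    simpa using (hasDerivAt_id x).const_add 1
  have hd : HasDerivAt (fun y => Real.log (1 - y) - Real.log (1 + y))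
      ((-1) / (1 - x) - 1 / (1 + x)) x := (ha.log h1.ne').sub (hb.log h2.ne')
  have : (-1) / (1 - x) - 1 / (1 + x) = 2 / (x ^ 2 - 1) := by
    field_simp
    ring
  rw [this] at hd
  exact hd.congr_of_eventuallyEq heq

private lemma hasDerivAt_F0 {x : ℝ} (hx : x ∈ Set.Ioo (-1:ℝ) 1) :
    HasDerivAt (fun y => (2 * y ^ 2 - 2) * Lfn y - 4 * y) (4 * x * Lfn x) x := by
  obtain ⟨h1, h2, hne⟩ := memIoo_facts hx
  have hp : HasDerivAt (fun y : ℝ => 2 * y ^ 2 - 2) (4 * x) x := by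
    have := ((hasDerivAt_pow 2 x).const_mul (2:ℝ)).sub_const 2
    refine this.congr_deriv ?_
    ring
  have hlin : HasDerivAt (fun y : ℝ => 4 * y) 4 x := by
    simpa using (hasDerivAt_id x).const_mul (4:ℝ)
  have := (hp.mul (hasDerivAt_Lfn hx)).sub hlin
  refine this.congr_deriv ?_
  field_simp
  ring

private lemma hasDerivAt_F1 {x : ℝ} (hx : x ∈ Set.Ioo (-1:ℝ) 1) :
    HasDerivAt (fun y => 4 * y * Lfn y) (4 * Lfn x + 8 * x / (x ^ 2 - 1)) x := by
  obtain ⟨h1, h2, hne⟩ := memIoo_facts hx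
  have hlin : HasDerivAt (fun y : ℝ => 4 * y) 4 x := by
    simpa using (hasDerivAt_id x).const_mul (4:ℝ)
  have := hlin.mul (hasDerivAt_Lfn hx)
  refine this.congr_deriv ?_
  field_simp
  ring

private lemma hasDerivAt_F2 {x : ℝ} (hx : x ∈ Set.Ioo (-1:ℝ) 1) :
    HasDerivAt (fun y => 4 * Lfn y + 8 * y / (y ^ 2 - 1))
      (-16 / (x ^ 2 - 1) ^ 2) x := by
  obtain ⟨h1, h2, hne⟩ := memIoo_facts hx
  have hnum : HasDerivAt (fun y : ℝ => 8 * y) 8 x := by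
    simpa using (hasDerivAt_id x).const_mul (8:ℝ)
  have hden : HasDerivAt (fun y : ℝ => y ^ 2 - 1) (2 * x) x := by
    have := (hasDerivAt_pow 2 x).sub_const 1
    refine this.congr_deriv ?_
    ring
  have hq : HasDerivAt (fun y : ℝ => 8 * y / (y ^ 2 - 1))
      ((8 * (x ^ 2 - 1) - 8 * x * (2 * x)) / (x ^ 2 - 1) ^ 2) x := hnum.div hden hne
  have := ((hasDerivAt_Lfn hx).const_mul (4:ℝ)).add hq
  refine this.congr_deriv ?_
  field_simp
  ring

private lemma hasDerivAt_F3 {x : ℝ} (hx : x ∈ Set.Ioo (-1:ℝ) 1) :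
    HasDerivAt (fun y : ℝ => -16 / (y ^ 2 - 1) ^ 2) (64 * x / (x ^ 2 - 1) ^ 3) x := by
  obtain ⟨h1, h2, hne⟩ := memIoo_facts hx
  have hden : HasDerivAt (fun y : ℝ => (y ^ 2 - 1) ^ 2) (2 * (x ^ 2 - 1) * (2 * x)) x := by
    have hb : HasDerivAt (fun y : ℝ => y ^ 2 - 1) (2 * x) x := by
      have := (hasDerivAt_pow 2 x).sub_const 1
      refine this.congr_deriv ?_
      ring
    have := hb.pow 2
    refine this.congr_deriv ?_
    ring
  have hne2 : (x ^ 2 - 1) ^ 2 ≠ 0 := pow_ne_zero _ hne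
  have := (hasDerivAt_const x (-16 : ℝ)).div hden hne2
  refine this.congr_deriv ?_
  field_simp
  ring

private lemma itdw_open {f : ℝ → ℝ} {n : ℕ} {x : ℝ} (hx : x ∈ Set.Ioo (-1:ℝ) 1) :
    iteratedDerivWithin n f (Set.Ioo (-1:ℝ) 1) x = iteratedDeriv n f x := by
  rw [iteratedDerivWithin_eq_iteratedFDerivWithin, iteratedDeriv_eq_iteratedFDeriv,
    iteratedFDerivWithin_of_isOpen n isOpen_Ioo hx]

private lemma key_deriv {Q : ℝ → ℝ} (hQ : ContDiffOn ℝ 4 Q (Set.Ioo (-1:ℝ) 1))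
    {k : ℕ} (hk : k < 4) {x : ℝ} (hx : x ∈ Set.Ioo (-1:ℝ) 1) :
    HasDerivAt (iteratedDeriv k Q) (iteratedDeriv (k + 1) Q x) x := by
  have hu : UniqueDiffOn ℝ (Set.Ioo (-1:ℝ) 1) := isOpen_Ioo.uniqueDiffOn
  have h1 : DifferentiableWithinAt ℝ (iteratedDerivWithin k Q (Set.Ioo (-1:ℝ) 1))
      (Set.Ioo (-1:ℝ) 1) x :=
    (hQ.differentiableOn_iteratedDerivWithin (by exact_mod_cast hk) hu) x hx
  have h2 : DifferentiableAt ℝ (iteratedDerivWithin k Q (Set.Ioo (-1:ℝ) 1)) x :=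
    h1.differentiableAt (isOpen_Ioo.mem_nhds hx)
  have h3 : iteratedDeriv k Q =ᶠ[nhds x] iteratedDerivWithin k Q (Set.Ioo (-1:ℝ) 1) := by
    filter_upwards [isOpen_Ioo.eventually_mem hx] with y hy
    exact (itdw_open hy).symm
  have h4 : DifferentiableAt ℝ (iteratedDeriv k Q) x := h2.congr_of_eventuallyEq h3
  rw [iteratedDeriv_succ]
  exact h4.hasDerivAt

private lemma const_of_hasDerivAt_zero {f : ℝ → ℝ}
    (h : ∀ x ∈ Set.Ioo (-1:ℝ) 1, HasDerivAt f 0 x)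
    {x y : ℝ} (hx : x ∈ Set.Ioo (-1:ℝ) 1) (hy : y ∈ Set.Ioo (-1:ℝ) 1) : f x = f y := by
  refine (convex_Ioo (-1:ℝ) 1).is_const_of_fderivWithin_eq_zero
    (fun z hz => ((h z hz).differentiableAt).differentiableWithinAt) (fun z hz => ?_) hx hy
  have hF : HasFDerivAt f (0 : ℝ →L[ℝ] ℝ) z := by
    have h0 : ContinuousLinearMap.toSpanSingleton ℝ (0:ℝ) = 0 := by ext; simp
    have := (h z hz).hasFDerivAt
    rwa [h0] at this
  exact hF.hasFDerivWithinAt.fderivWithin (isOpen_Ioo.uniqueDiffOn z hz)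

/-- A function `Q`, four times continuously differentiable on `(−1,1)`, satisfies
`(x²−1)Q⁗(x) + 4x Q‴(x) = 0` on `(−1,1)` iff
`Q(x) = c₁[(2x²−2)log((1−x)/(1+x)) − 4x] + c₂ + c₃x + c₄x²` for some constants. -/
theorem stmt6 (Q : ℝ → ℝ) (hQ : ContDiffOn ℝ 4 Q (Set.Ioo (-1 : ℝ) 1)) :
    (∀ x ∈ Set.Ioo (-1 : ℝ) 1,
        (x ^ 2 - 1) * iteratedDerivWithin 4 Q (Set.Ioo (-1 : ℝ) 1) x +
            4 * x * iteratedDerivWithin 3 Q (Set.Ioo (-1 : ℝ) 1) x = 0) ↔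
      (∃ c₁ c₂ c₃ c₄ : ℝ, ∀ x ∈ Set.Ioo (-1 : ℝ) 1,
        Q x = c₁ * ((2 * x ^ 2 - 2) * Real.log ((1 - x) / (1 + x)) - 4 * x) +
            c₂ + c₃ * x + c₄ * x ^ 2) := by
  have h0mem : (0:ℝ) ∈ Set.Ioo (-1:ℝ) 1 := by norm_num
  have hL0 : Lfn 0 = 0 := by simp [Lfn]
  constructor
  · intro h
    have hode : ∀ x ∈ Set.Ioo (-1:ℝ) 1,
        (x ^ 2 - 1) * iteratedDeriv 4 Q x + 4 * x * iteratedDeriv 3 Q x = 0 := by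
      intro x hx
      have := h x hx
      rwa [itdw_open hx, itdw_open hx] at this
    -- Step A : (x²−1)² * Q''' is constant
    have hG : ∀ x ∈ Set.Ioo (-1:ℝ) 1,
        HasDerivAt (fun y => (y ^ 2 - 1) ^ 2 * iteratedDeriv 3 Q y) 0 x := by
      intro x hx
      have h3 := key_deriv hQ (k := 3) (by norm_num) hx
      have hden : HasDerivAt (fun y : ℝ => (y ^ 2 - 1) ^ 2) (2 * (x ^ 2 - 1) * (2 * x)) x := by
        have hb : HasDerivAt (fun y : ℝ => y ^ 2 - 1) (2 * x) x := by
          have := (hasDerivAt_pow 2 x).sub_const 1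
          refine this.congr_deriv ?_
          ring
        have := hb.pow 2
        refine this.congr_deriv ?_
        ring
      have := hden.mul h3
      refine this.congr_deriv ?_
      have hh := hode x hx
      linear_combination (x ^ 2 - 1) * hh
    set c : ℝ := iteratedDeriv 3 Q 0 with hc
    have hGc : ∀ x ∈ Set.Ioo (-1:ℝ) 1, (x ^ 2 - 1) ^ 2 * iteratedDeriv 3 Q x = c := by
      intro x hx
      have := const_of_hasDerivAt_zero hG hx h0mem
      simpa using this
    set c₁ : ℝ := -c / 16 with hc₁
    have hD3 : ∀ x ∈ Set.Ioo (-1:ℝ) 1,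
        iteratedDeriv 3 Q x = c₁ * (-16 / (x ^ 2 - 1) ^ 2) := by
      intro x hx
      obtain ⟨_, _, hne⟩ := memIoo_facts hx
      have hne2 : (x ^ 2 - 1) ^ 2 ≠ 0 := pow_ne_zero _ hne
      have hh := hGc x hx
      rw [hc₁]
      field_simp
      linear_combination hh
    -- Step B
    set φ2 : ℝ → ℝ := fun y => iteratedDeriv 2 Q y - c₁ * (4 * Lfn y + 8 * y / (y ^ 2 - 1))
      with hφ2def
    have hφ2 : ∀ x ∈ Set.Ioo (-1:ℝ) 1, HasDerivAt φ2 0 x := by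
      intro x hx
      have h2 := key_deriv hQ (k := 2) (by norm_num) hx
      have := h2.sub ((hasDerivAt_F2 hx).const_mul c₁)
      refine this.congr_deriv ?_
      rw [hD3 x hx]
      ring
    set c₄ : ℝ := φ2 0 / 2 with hc₄
    have hD2 : ∀ x ∈ Set.Ioo (-1:ℝ) 1,
        iteratedDeriv 2 Q x = c₁ * (4 * Lfn x + 8 * x / (x ^ 2 - 1)) + 2 * c₄ := by
      intro x hx
      have h2c : 2 * c₄ = iteratedDeriv 2 Q 0 - c₁ * (4 * Lfn 0 + 8 * 0 / (0 ^ 2 - 1)) := by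
        rw [hc₄]
        simp only [hφ2def]
        ring
      have := const_of_hasDerivAt_zero hφ2 hx h0mem
      simp only [hφ2def] at this
      linarith [this, h2c]
    -- Step C
    set φ1 : ℝ → ℝ := fun y => iteratedDeriv 1 Q y - c₁ * (4 * y * Lfn y) - 2 * c₄ * y
      with hφ1def
    have hφ1 : ∀ x ∈ Set.Ioo (-1:ℝ) 1, HasDerivAt φ1 0 x := by
      intro x hx
      have h1 := key_deriv hQ (k := 1) (by norm_num) hx
      have hlin : HasDerivAt (fun y : ℝ => 2 * c₄ * y) (2 * c₄) x := by
        simpa using (hasDerivAt_id x).const_mul (2 * c₄)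
      have := (h1.sub ((hasDerivAt_F1 hx).const_mul c₁)).sub hlin
      refine this.congr_deriv ?_
      rw [hD2 x hx]
      ring
    set c₃ : ℝ := φ1 0 with hc₃
    have hD1 : ∀ x ∈ Set.Ioo (-1:ℝ) 1,
        iteratedDeriv 1 Q x = c₁ * (4 * x * Lfn x) + 2 * c₄ * x + c₃ := by
      intro x hx
      have h1c : c₃ = iteratedDeriv 1 Q 0 - c₁ * (4 * 0 * Lfn 0) - 2 * c₄ * 0 := by
        rw [hc₃]
      have := const_of_hasDerivAt_zero hφ1 hx h0mem
      simp only [hφ1def] at this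
      linarith [this, h1c]
    -- Step D
    set φ0 : ℝ → ℝ := fun y =>
      Q y - c₁ * ((2 * y ^ 2 - 2) * Lfn y - 4 * y) - c₄ * y ^ 2 - c₃ * y with hφ0def
    have hφ0 : ∀ x ∈ Set.Ioo (-1:ℝ) 1, HasDerivAt φ0 0 x := by
      intro x hx
      have h1 := key_deriv hQ (k := 0) (by norm_num) hx
      rw [iteratedDeriv_zero] at h1
      have hsq : HasDerivAt (fun y : ℝ => c₄ * y ^ 2) (c₄ * (2 * x)) x := by
        have := (hasDerivAt_pow 2 x).const_mul c₄
        refine this.congr_deriv ?_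
        ring
      have hlin : HasDerivAt (fun y : ℝ => c₃ * y) c₃ x := by
        simpa using (hasDerivAt_id x).const_mul c₃
      have := ((h1.sub ((hasDerivAt_F0 hx).const_mul c₁)).sub hsq).sub hlin
      refine this.congr_deriv ?_
      rw [hD1 x hx]
      ring
    refine ⟨c₁, φ0 0, c₃, c₄, fun x hx => ?_⟩
    have h0c : φ0 0 = Q 0 - c₁ * ((2 * 0 ^ 2 - 2) * Lfn 0 - 4 * 0) - c₄ * 0 ^ 2 - c₃ * 0 := by
      simp only [hφ0def]
    have := const_of_hasDerivAt_zero hφ0 hx h0mem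
    simp only [hφ0def] at this
    show Q x = c₁ * ((2 * x ^ 2 - 2) * Lfn x - 4 * x) + φ0 0 + c₃ * x + c₄ * x ^ 2
    linarith [this, h0c]
  · rintro ⟨c₁, c₂, c₃, c₄, hc⟩ x hx
    obtain ⟨_, _, hne⟩ := memIoo_facts hx
    set g : ℝ → ℝ := fun y =>
      c₁ * ((2 * y ^ 2 - 2) * Lfn y - 4 * y) + c₂ + c₃ * y + c₄ * y ^ 2 with hgdef
    have hu : UniqueDiffOn ℝ (Set.Ioo (-1:ℝ) 1) := isOpen_Ioo.uniqueDiffOn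
    have hEq : Set.EqOn Q g (Set.Ioo (-1:ℝ) 1) := fun y hy => hc y hy
    have hQg3 : iteratedDerivWithin 3 Q (Set.Ioo (-1:ℝ) 1) x = iteratedDeriv 3 g x := by
      rw [iteratedDerivWithin_congr hEq hx, itdw_open hx]
    have hQg4 : iteratedDerivWithin 4 Q (Set.Ioo (-1:ℝ) 1) x = iteratedDeriv 4 g x := by
      rw [iteratedDerivWithin_congr hEq hx, itdw_open hx]
    -- compute derivatives of g
    have hg1 : ∀ y ∈ Set.Ioo (-1:ℝ) 1,
        deriv g y = c₁ * (4 * y * Lfn y) + c₃ + 2 * c₄ * y := by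
      intro y hy
      have hsq : HasDerivAt (fun z : ℝ => c₄ * z ^ 2) (2 * c₄ * y) y := by
        have := (hasDerivAt_pow 2 y).const_mul c₄
        refine this.congr_deriv ?_
        ring
      have hlin : HasDerivAt (fun z : ℝ => c₃ * z) c₃ y := by
        simpa using (hasDerivAt_id y).const_mul c₃
      have : HasDerivAt g (c₁ * (4 * y * Lfn y) + c₃ + 2 * c₄ * y) y := by
        have h' := ((((hasDerivAt_F0 hy).const_mul c₁).add_const c₂).add hlin).add hsq
        exact h'
      exact this.deriv
    have hg2 : ∀ y ∈ Set.Ioo (-1:ℝ) 1,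
        deriv (deriv g) y = c₁ * (4 * Lfn y + 8 * y / (y ^ 2 - 1)) + 2 * c₄ := by
      intro y hy
      have heq : deriv g =ᶠ[nhds y]
          (fun z => c₁ * (4 * z * Lfn z) + c₃ + 2 * c₄ * z) := by
        filter_upwards [isOpen_Ioo.eventually_mem hy] with z hz
        exact hg1 z hz
      rw [heq.deriv_eq]
      have hlin : HasDerivAt (fun z : ℝ => 2 * c₄ * z) (2 * c₄) y := by
        simpa using (hasDerivAt_id y).const_mul (2 * c₄)
      have : HasDerivAt (fun z => c₁ * (4 * z * Lfn z) + c₃ + 2 * c₄ * z)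
          (c₁ * (4 * Lfn y + 8 * y / (y ^ 2 - 1)) + 2 * c₄) y := by
        have h' := (((hasDerivAt_F1 hy).const_mul c₁).add_const c₃).add hlin
        exact h'
      exact this.deriv
    have hg3 : ∀ y ∈ Set.Ioo (-1:ℝ) 1,
        deriv (deriv (deriv g)) y = c₁ * (-16 / (y ^ 2 - 1) ^ 2) := by
      intro y hy
      have heq : deriv (deriv g) =ᶠ[nhds y]
          (fun z => c₁ * (4 * Lfn z + 8 * z / (z ^ 2 - 1)) + 2 * c₄) := by
        filter_upwards [isOpen_Ioo.eventually_mem hy] with z hz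
        exact hg2 z hz
      rw [heq.deriv_eq]
      have : HasDerivAt (fun z => c₁ * (4 * Lfn z + 8 * z / (z ^ 2 - 1)) + 2 * c₄)
          (c₁ * (-16 / (y ^ 2 - 1) ^ 2)) y :=
        ((hasDerivAt_F2 hy).const_mul c₁).add_const (2 * c₄)
      exact this.deriv
    have hg4 : deriv (deriv (deriv (deriv g))) x = c₁ * (64 * x / (x ^ 2 - 1) ^ 3) := by
      have heq : deriv (deriv (deriv g)) =ᶠ[nhds x]
          (fun z => c₁ * (-16 / (z ^ 2 - 1) ^ 2)) := by
        filter_upwards [isOpen_Ioo.eventually_mem hx] with z hz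
        exact hg3 z hz
      rw [heq.deriv_eq]
      exact ((hasDerivAt_F3 hx).const_mul c₁).deriv
    have h3eq : iteratedDeriv 3 g = deriv (deriv (deriv g)) := by
      rw [show (3:ℕ) = 2 + 1 from rfl, iteratedDeriv_succ,
        show (2:ℕ) = 1 + 1 from rfl, iteratedDeriv_succ, iteratedDeriv_one]
    have h4eq : iteratedDeriv 4 g = deriv (deriv (deriv (deriv g))) := by
      rw [show (4:ℕ) = 3 + 1 from rfl, iteratedDeriv_succ, h3eq]
    rw [hQg3, hQg4, h3eq, h4eq, hg3 x hx, hg4]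
    field_simp
    ring
end

section
/- Let a, b, K : ℤ → ℝ with K(n) = a(n+3)·K(n+4) + b(n+2)·K(n+3) for all n ∈ ℤ, and let u : ℤ → ℝ satisfy u(n+4) = a(n)·u(n) + b(n)·u(n+1) for all n ∈ ℤ. Then the function φ(n) = a(n)·K(n+1)·u(n) + K(n−2)·u(n+1) + K(n−1)·u(n+2) + K(n)·u(n+3) is a first integral: φ(n+1) = φ(n) for all n ∈ ℤ. -/
/-- If `K(n) = a(n+3)K(n+4) + b(n+2)K(n+3)` and `u` solves `u(n+4) = a(n)u(n) + b(n)u(n+1)`,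
then `φ(n) = a(n)K(n+1)u(n) + K(n−2)u(n+1) + K(n−1)u(n+2) + K(n)u(n+3)` is a first
integral: `φ(n+1) = φ(n)` for all `n ∈ ℤ`. -/
theorem stmt8 (a b K u : ℤ → ℝ)
    (hK : ∀ n : ℤ, K n = a (n + 3) * K (n + 4) + b (n + 2) * K (n + 3))
    (hu : ∀ n : ℤ, u (n + 4) = a n * u n + b n * u (n + 1)) :
    let φ : ℤ → ℝ := fun n =>
      a n * K (n + 1) * u n + K (n - 2) * u (n + 1) + K (n - 1) * u (n + 2) + K n * u (n + 3)
    ∀ n : ℤ, φ (n + 1) = φ n := by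
  intro φ n
  show a (n+1) * K (n+1+1) * u (n+1) + K (n+1-2) * u (n+1+1) + K (n+1-1) * u (n+1+2)
      + K (n+1) * u (n+1+3) = _
  have h1 := hK (n - 2)
  have h2 := hu n
  have e2 : n - 2 + 3 = n + 1 := by ring
  have e3 : n - 2 + 4 = n + 2 := by ring
  have e4 : n - 2 + 2 = n := by ring
  have e5 : n + 1 + 1 = n + 2 := by ring
  have e6 : n + 1 + 2 = n + 3 := by ring
  have e7 : n + 1 - 2 = n - 1 := by ring
  have e8 : n + 1 - 1 = n := by ring
  rw [e2, e3, e4] at h1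
  have e1 : n + 1 + 3 = n + 4 := by ring
  rw [e5, e6, e7, e8, e1, h2]
  show _ = a n * K (n + 1) * u n + K (n - 2) * u (n + 1) + K (n - 1) * u (n + 2) + K n * u (n + 3)
  rw [h1]
  ring
end

section
/- Let u : ℕ → ℝ satisfy (n+4)·u(n+4) = n·u(n) for all n ∈ ℕ. Then each of the four functions φ₁(n) = (1/3)[n·u(n) + (n+1)·u(n+1) + (n+2)·u(n+2) + (n+3)·u(n+3)], φ₂(n) = ((−1)^n/3)[−n·u(n) + (n+1)·u(n+1) − (n+2)·u(n+2) + (n+3)·u(n+3)], φ₃(n) = (1/3)[−n·sin(nπ/2)·u(n) − (n+1)·cos(nπ/2)·u(n+1) + (n+2)·sin(nπ/2)·u(n+2) + (n+3)·cos(nπ/2)·u(n+3)], φ₄(n) = (1/3)[n·cos(nπ/2)·u(n) − (n+1)·sin(nπ/2)·u(n+1) − (n+2)·cos(nπ/2)·u(n+2) + (n+3)·sin(nπ/2)·u(n+3)] is a first integral: φᵢ(n+1) = φᵢ(n) for all n ∈ ℕ and i = 1,2,3,4. -/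
open Real

/-- For any solution of `(n+4)·u(n+4) = n·u(n)`, each of the four stated functions is a
first integral: `φᵢ(n+1) = φᵢ(n)` for all `n`. -/
theorem stmt12 (u : ℕ → ℝ) (hu : ∀ n : ℕ, ((n : ℝ) + 4) * u (n + 4) = (n : ℝ) * u n) :
    let φ₁ : ℕ → ℝ := fun n => (1 / 3) *
      ((n : ℝ) * u n + ((n : ℝ) + 1) * u (n + 1) + ((n : ℝ) + 2) * u (n + 2) +
        ((n : ℝ) + 3) * u (n + 3))
    let φ₂ : ℕ → ℝ := fun n => ((-1 : ℝ) ^ n / 3) *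
      (-(n : ℝ) * u n + ((n : ℝ) + 1) * u (n + 1) - ((n : ℝ) + 2) * u (n + 2) +
        ((n : ℝ) + 3) * u (n + 3))
    let φ₃ : ℕ → ℝ := fun n => (1 / 3) *
      (-(n : ℝ) * Real.sin ((n : ℝ) * π / 2) * u n -
        ((n : ℝ) + 1) * Real.cos ((n : ℝ) * π / 2) * u (n + 1) +
        ((n : ℝ) + 2) * Real.sin ((n : ℝ) * π / 2) * u (n + 2) +
        ((n : ℝ) + 3) * Real.cos ((n : ℝ) * π / 2) * u (n + 3))
    let φ₄ : ℕ → ℝ := fun n => (1 / 3) *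
      ((n : ℝ) * Real.cos ((n : ℝ) * π / 2) * u n -
        ((n : ℝ) + 1) * Real.sin ((n : ℝ) * π / 2) * u (n + 1) -
        ((n : ℝ) + 2) * Real.cos ((n : ℝ) * π / 2) * u (n + 2) +
        ((n : ℝ) + 3) * Real.sin ((n : ℝ) * π / 2) * u (n + 3))
    ∀ n : ℕ, φ₁ (n + 1) = φ₁ n ∧ φ₂ (n + 1) = φ₂ n ∧ φ₃ (n + 1) = φ₃ n ∧ φ₄ (n + 1) = φ₄ n := by
  intro φ₁ φ₂ φ₃ φ₄ n
  have h := hu n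
  have harg : ((n : ℝ) + 1) * π / 2 = (n : ℝ) * π / 2 + π / 2 := by ring
  have hs : Real.sin (((n : ℝ) + 1) * π / 2) = Real.cos ((n : ℝ) * π / 2) := by
    rw [harg, Real.sin_add_pi_div_two]
  have hc : Real.cos (((n : ℝ) + 1) * π / 2) = -Real.sin ((n : ℝ) * π / 2) := by
    rw [harg, Real.cos_add_pi_div_two]
  simp only [φ₁, φ₂, φ₃, φ₄, show n + 1 + 3 = n + 4 from rfl, show n + 1 + 2 = n + 3 from rfl,
    show n + 1 + 1 = n + 2 from rfl, hs, hc, Nat.cast_add, Nat.cast_one, pow_succ]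
  refine ⟨by linear_combination (1/3) * h, by linear_combination (-(-1:ℝ)^n/3) * h,
    by linear_combination (-(Real.sin ((n : ℝ) * π / 2))/3) * h,
    by linear_combination ((Real.cos ((n : ℝ) * π / 2))/3) * h⟩
end

section
/- For every sequence u : ℕ → ℝ (no solution assumption) and every n ∈ ℕ, the functions Φ₁(n) = (1/3)[n·u(n) + (n+1)·u(n+1) + (n+2)·u(n+2) + (n+3)·u(n+3)], Φ₂(n) = ((−1)^n/3)[−n·u(n) + (n+1)·u(n+1) − (n+2)·u(n+2) + (n+3)·u(n+3)], Φ₃(n) = (1/3)[−n·sin(nπ/2)·u(n) − (n+1)·cos(nπ/2)·u(n+1) + (n+2)·sin(nπ/2)·u(n+2) + (n+3)·cos(nπ/2)·u(n+3)], Φ₄(n) = (1/3)[n·cos(nπ/2)·u(n) − (n+1)·sin(nπ/2)·u(n+1) − (n+2)·cos(nπ/2)·u(n+2) + (n+3)·sin(nπ/2)·u(n+3)] satisfy the multiplier identities Φ₁(n+1) − Φ₁(n) = ((n+4)/3)·(u(n+4) − (n/(n+4))·u(n)), Φ₂(n+1) − Φ₂(n) = ((−1)^{n+1}(n+4)/3)·(u(n+4)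 − (n/(n+4))·u(n)), Φ₃(n+1) − Φ₃(n) = (−((n+4)/3)·sin(nπ/2))·(u(n+4) − (n/(n+4))·u(n)), Φ₄(n+1) − Φ₄(n) = (((n+4)/3)·cos(nπ/2))·(u(n+4) − (n/(n+4))·u(n)). -/
open Real

/-- For every sequence `u` (no solution assumption), the four first integrals of
`u(n+4) = (n/(n+4))·u(n)` satisfy the multiplier identities
`(S − id)Φ = Λ(n)·(u(n+4) − (n/(n+4))·u(n))` with multipliers
`(n+4)/3`, `(−1)^{n+1}(n+4)/3`, `−((n+4)/3)sin(nπ/2)`, `((n+4)/3)cos(nπ/2)`. -/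
theorem stmt14 (u : ℕ → ℝ) :
    let Φ₁ : ℕ → ℝ := fun n => (1 / 3) *
      ((n : ℝ) * u n + ((n : ℝ) + 1) * u (n + 1) + ((n : ℝ) + 2) * u (n + 2) +
        ((n : ℝ) + 3) * u (n + 3))
    let Φ₂ : ℕ → ℝ := fun n => ((-1 : ℝ) ^ n / 3) *
      (-(n : ℝ) * u n + ((n : ℝ) + 1) * u (n + 1) - ((n : ℝ) + 2) * u (n + 2) +
        ((n : ℝ) + 3) * u (n + 3))
    let Φ₃ : ℕ → ℝ := fun n => (1 / 3) *
      (-(n : ℝ) * Real.sin ((n : ℝ) * π / 2) * u n -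
        ((n : ℝ) + 1) * Real.cos ((n : ℝ) * π / 2) * u (n + 1) +
        ((n : ℝ) + 2) * Real.sin ((n : ℝ) * π / 2) * u (n + 2) +
        ((n : ℝ) + 3) * Real.cos ((n : ℝ) * π / 2) * u (n + 3))
    let Φ₄ : ℕ → ℝ := fun n => (1 / 3) *
      ((n : ℝ) * Real.cos ((n : ℝ) * π / 2) * u n -
        ((n : ℝ) + 1) * Real.sin ((n : ℝ) * π / 2) * u (n + 1) -
        ((n : ℝ) + 2) * Real.cos ((n : ℝ) * π / 2) * u (n + 2) +
        ((n : ℝ) + 3) * Real.sin ((n : ℝ) * π / 2) * u (n + 3))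
    ∀ n : ℕ,
      Φ₁ (n + 1) - Φ₁ n =
        ((n : ℝ) + 4) / 3 * (u (n + 4) - (n : ℝ) / ((n : ℝ) + 4) * u n) ∧
      Φ₂ (n + 1) - Φ₂ n =
        (-1 : ℝ) ^ (n + 1) * ((n : ℝ) + 4) / 3 *
          (u (n + 4) - (n : ℝ) / ((n : ℝ) + 4) * u n) ∧
      Φ₃ (n + 1) - Φ₃ n =
        -(((n : ℝ) + 4) / 3 * Real.sin ((n : ℝ) * π / 2)) *
          (u (n + 4) - (n : ℝ) / ((n : ℝ) + 4) * u n) ∧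
      Φ₄ (n + 1) - Φ₄ n =
        ((n : ℝ) + 4) / 3 * Real.cos ((n : ℝ) * π / 2) *
          (u (n + 4) - (n : ℝ) / ((n : ℝ) + 4) * u n) := by
  intro Φ₁ Φ₂ Φ₃ Φ₄ n
  have h4 : (n : ℝ) + 4 ≠ 0 := by positivity
  have hs : Real.sin (((n : ℝ) + 1) * π / 2) = Real.cos ((n : ℝ) * π / 2) := by
    rw [show ((n : ℝ) + 1) * π / 2 = (n : ℝ) * π / 2 + π / 2 by ring, Real.sin_add_pi_div_two]
  have hc : Real.cos (((n : ℝ) + 1) * π / 2) = -Real.sin ((n : ℝ) * π / 2) := by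
    rw [show ((n : ℝ) + 1) * π / 2 = (n : ℝ) * π / 2 + π / 2 by ring, Real.cos_add_pi_div_two]
  refine ⟨?_, ?_, ?_, ?_⟩ <;>
  · simp only [Φ₁, Φ₂, Φ₃, Φ₄, show n+1+1 = n+2 from rfl, show n+1+2 = n+3 from rfl,
      show n+1+3 = n+4 from rfl, pow_succ]
    push_cast
    try rw [hs, hc]
    field_simp
    ring
end

section
/- Define, for n ∈ ℕ, the characteristics Q₁(n) = 1, Q₂(n) = (−1)^n, Q₃(n) = cos(nπ/2), Q₄(n) = sin(nπ/2), and for a sequence u : ℕ → ℝ define the pairing XᵢΦⱼ(n) = Σ_{k=0}^{3} Qᵢ(n+k)·(∂Φⱼ/∂u(n+k)), where Φ₁ = u(n)+u(n+1)+u(n+2)+u(n+3), Φ₂ = (−1)^n(−u(n)+u(n+1)−u(n+2)+u(n+3)), Φ₃ = sin(nπ/2)(u(n+2)−u(n))+cos(nπ/2)(u(n+3)−u(n+1)), Φ₄ = sin(nπ/2)(u(n+3)−u(n+1))−cos(nπ/2)(u(n+2)−u(n)) (so ∂Φⱼ/∂u(n+k) is the coefficient of u(n+k) in Φⱼ). Then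 for all n ∈ ℕ: X₁Φ₁ = 4, X₂Φ₂ = −4, X₃Φ₄ = 2, X₄Φ₃ = −2, and XᵢΦⱼ = 0 for every other pair (i,j) ∈ {1,2,3,4}² with (i,j) ∉ {(1,1),(2,2),(3,4),(4,3)}. -/
open Real

/-- The four symmetry characteristics of `u_{n+4} = u_n`:
`Q₁(n)=1`, `Q₂(n)=(−1)^n`, `Q₃(n)=cos(nπ/2)`, `Q₄(n)=sin(nπ/2)`. -/
noncomputable def Q15 : Fin 4 → ℕ → ℝ
  | 0 => fun _ => 1
  | 1 => fun m => (-1 : ℝ) ^ m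
  | 2 => fun m => Real.cos ((m : ℝ) * π / 2)
  | 3 => fun m => Real.sin ((m : ℝ) * π / 2)

/-- `coef15 j n k` is the coefficient `∂Φⱼ/∂u(n+k)` of `u(n+k)` in the first integral
`Φ₁ = u(n)+u(n+1)+u(n+2)+u(n+3)`, `Φ₂ = (−1)^n(−u(n)+u(n+1)−u(n+2)+u(n+3))`,
`Φ₃ = sin(nπ/2)(u(n+2)−u(n))+cos(nπ/2)(u(n+3)−u(n+1))`,
`Φ₄ = sin(nπ/2)(u(n+3)−u(n+1))−cos(nπ/2)(u(n+2)−u(n))`. -/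
noncomputable def coef15 : Fin 4 → ℕ → Fin 4 → ℝ
  | 0 => fun _ _ => 1
  | 1 => fun n k => (-1 : ℝ) ^ n * ![(-1 : ℝ), 1, -1, 1] k
  | 2 => fun n k =>
      ![-Real.sin ((n : ℝ) * π / 2), -Real.cos ((n : ℝ) * π / 2),
        Real.sin ((n : ℝ) * π / 2), Real.cos ((n : ℝ) * π / 2)] k
  | 3 => fun n k =>
      ![Real.cos ((n : ℝ) * π / 2), -Real.sin ((n : ℝ) * π / 2),
        -Real.cos ((n : ℝ) * π / 2), Real.sin ((n : ℝ) * π / 2)] k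

/-- The pairing `XᵢΦⱼ(n) = Σ_{k=0}^{3} Qᵢ(n+k)·∂Φⱼ/∂u(n+k)`. -/
noncomputable def pairing15 (i j : Fin 4) (n : ℕ) : ℝ :=
  ∑ k : Fin 4, Q15 i (n + (k : ℕ)) * coef15 j n k

/-- `X₁Φ₁ = 4`, `X₂Φ₂ = −4`, `X₃Φ₄ = 2`, `X₄Φ₃ = −2`, and `XᵢΦⱼ = 0` for every other pair. -/
theorem stmt15 : ∀ n : ℕ,
    pairing15 0 0 n = 4 ∧ pairing15 1 1 n = -4 ∧
    pairing15 2 3 n = 2 ∧ pairing15 3 2 n = -2 ∧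
    ∀ i j : Fin 4, (i, j) ∉ ({(0, 0), (1, 1), (2, 3), (3, 2)} : Set (Fin 4 × Fin 4)) →
      pairing15 i j n = 0 := by
  intro n
  have c1 : Real.cos (((n:ℝ)+1)*π/2) = -Real.sin ((n:ℝ)*π/2) := by
    rw [show ((n:ℝ)+1)*π/2 = (n:ℝ)*π/2 + π/2 by ring, Real.cos_add_pi_div_two]
  have s1 : Real.sin (((n:ℝ)+1)*π/2) = Real.cos ((n:ℝ)*π/2) := by
    rw [show ((n:ℝ)+1)*π/2 = (n:ℝ)*π/2 + π/2 by ring, Real.sin_add_pi_div_two]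
  have c2 : Real.cos (((n:ℝ)+2)*π/2) = -Real.cos ((n:ℝ)*π/2) := by
    rw [show ((n:ℝ)+2)*π/2 = (n:ℝ)*π/2 + π by ring, Real.cos_add_pi]
  have s2 : Real.sin (((n:ℝ)+2)*π/2) = -Real.sin ((n:ℝ)*π/2) := by
    rw [show ((n:ℝ)+2)*π/2 = (n:ℝ)*π/2 + π by ring, Real.sin_add_pi]
  have c3 : Real.cos (((n:ℝ)+3)*π/2) = Real.sin ((n:ℝ)*π/2) := by
    rw [show ((n:ℝ)+3)*π/2 = ((n:ℝ)+2)*π/2 + π/2 by ring, Real.cos_add_pi_div_two, s2,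
      neg_neg]
  have s3 : Real.sin (((n:ℝ)+3)*π/2) = -Real.cos ((n:ℝ)*π/2) := by
    rw [show ((n:ℝ)+3)*π/2 = ((n:ℝ)+2)*π/2 + π/2 by ring, Real.sin_add_pi_div_two, c2]
  have hsc := Real.sin_sq_add_cos_sq ((n:ℝ)*π/2)
  have hm2 : ((-1:ℝ)^n)^2 = 1 := by
    rw [← pow_mul, mul_comm, pow_mul]; norm_num
  have hm3 : ((-1:ℝ))^(n*2) = 1 := by rw [mul_comm, pow_mul]; norm_num
  refine ⟨?_, ?_, ?_, ?_, fun i j hij => ?g⟩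
  case g =>
    fin_cases i <;> fin_cases j <;>
      first
      | (exfalso; simp at hij; done)
      | (simp only [pairing15, Q15, coef15, Fin.sum_univ_four, Fin.isValue,
          Matrix.cons_val_zero, Matrix.cons_val_one, Matrix.head_cons, Matrix.cons_val_two,
          Matrix.tail_cons, Matrix.cons_val_three, Fin.val_zero, Fin.val_one, Fin.val_two,
          show ((3:Fin 4):ℕ)=3 from rfl, Nat.add_zero, pow_add]
         push_cast
         try simp only [c1, s1, c2, s2, c3, s3]
         ring_nf at hsc ⊢
         try first
         | rfl
         | nlinarith [hsc, hm2, hm3])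
  all_goals
    simp only [pairing15, Q15, coef15, Fin.sum_univ_four, Fin.isValue,
      Matrix.cons_val_zero, Matrix.cons_val_one, Matrix.head_cons, Matrix.cons_val_two,
      Matrix.tail_cons, Matrix.cons_val_three, Fin.val_zero, Fin.val_one, Fin.val_two,
      show ((3:Fin 4):ℕ)=3 from rfl, Nat.add_zero, pow_add]
    push_cast
    try simp only [c1, s1, c2, s2, c3, s3]
    ring_nf at hsc ⊢
    try first
    | rfl
    | nlinarith [hsc, hm2, hm3]
end
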